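/- arXiv:1301.5493 — 3 statements merged into one kernel-verified Lean document; each statement's English description precedes it below -/
import Mathlib

section
/- Let X be a topological space and let (s_n) be a sequence in a Hausdorff topological space S with no convergent subsequence. Then for any smooth (hence continuous) curve c : ℝ → ℝ × S, the preimage under c of the complement W of the set {(1/n, s_n) : n ∈ ℕ, n ≥ 1} is open in ℝ. -/
open Filter Topology

theorem preimage_of_complement_open
    {S : Type*} [TopologicalSpace S] [T2Space S] (s : ℕ → S)
    (hs : ∀ φ : ℕ → ℕ, StrictMono φ → ∀ x : S, ¬ Tendsto (s ∘ φ) atTop (𝓝 x))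
    (c : ℝ → ℝ × S) (hc : Continuous c) :
    IsOpen (c ⁻¹' ({p : ℝ × S | ∃ n : ℕ, 1 ≤ n ∧ p = ((1 / (n : ℝ)), s n)}ᶜ)) := by
  rw [Set.preimage_compl]
  rw [isOpen_compl_iff]
  apply IsSeqClosed.isClosed
  intro u t hu hut
  -- choose n k
  choose n hn1 hn2 using hu
  have hcu : Tendsto (fun k => c (u k)) atTop (𝓝 (c t)) :=
    (hc.continuousAt.tendsto).comp hut
  by_cases hfin : ∃ m : ℕ, {k | n k = m}.Infinite
  · obtain ⟨m, hm⟩ := hfin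
    have hfreq : ∃ᶠ k in atTop, n k = m := Nat.frequently_atTop_iff_infinite.mpr hm
    obtain ⟨φ, hφ, hφm⟩ := extraction_of_frequently_atTop hfreq
    have : Tendsto (fun k => c (u (φ k))) atTop (𝓝 (c t)) :=
      hcu.comp hφ.tendsto_atTop
    have hconst : (fun k => c (u (φ k))) = fun _ => ((1 / (m : ℝ)), s m) := by
      funext k
      rw [hn2 (φ k), hφm k]
    rw [hconst] at this
    have := tendsto_nhds_unique this tendsto_const_nhds
    exact ⟨m, (hφm 0) ▸ hn1 (φ 0), this⟩
  · exfalso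
    push_neg at hfin
    have hn_top : Tendsto n atTop atTop := by
      rw [tendsto_atTop]
      intro m
      have : {k | n k < m}.Finite := by
        have : {k | n k < m} ⊆ ⋃ j ∈ Finset.range m, {k | n k = j} := by
          intro k hk
          simp only [Set.mem_iUnion, Finset.mem_range]
          exact ⟨n k, hk, rfl⟩
        exact Set.Finite.subset (Set.Finite.biUnion (Finset.range m).finite_toSet
          (fun j _ => hfin j)) this
      rcases this.bddAbove with ⟨N, hN⟩
      filter_upwards [eventually_ge_atTop (N + 1)] with k hk
      by_contra h
      exact Nat.not_succ_le_self N (le_trans hk (hN (Set.mem_setOf.mpr (by omega))))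
    obtain ⟨φ, hφ, hnφ⟩ := strictMono_subseq_of_tendsto_atTop hn_top
    apply hs (n ∘ φ) hnφ (c t).2
    have : Tendsto (fun k => (c (u (φ k))).2) atTop (𝓝 (c t).2) :=
      (continuous_snd.continuousAt.tendsto).comp (hcu.comp hφ.tendsto_atTop)
    have heq : (fun k => (c (u (φ k))).2) = s ∘ n ∘ φ := by
      funext k; rw [Function.comp_apply, Function.comp_apply, hn2 (φ k)]
    rwa [heq] at this
end

section
/- Let S be a topological space with the property that every open neighbourhood of {0} × S in ℝ × S contains a set of the form (-ε, ε) × S for some ε > 0. If moreover every set whose preimage under all continuous curves ℝ → ℝ × S is open, is open, then S is sequentially compact. -/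
open Filter Topology

theorem seq_compact_of_strip_property {S : Type*} [TopologicalSpace S]
    (hstrip : ∀ W : Set (ℝ × S),
      (∀ c : ℝ → ℝ × S, Continuous c → IsOpen (c ⁻¹' W)) →
      ({0} ×ˢ (Set.univ : Set S)) ⊆ W →
      ∃ ε > (0:ℝ), (Set.Ioo (-ε) ε ×ˢ (Set.univ : Set S)) ⊆ W) :
    IsSeqCompact (Set.univ : Set S) := by
  intro s _
  by_contra hcon
  push_neg at hcon
  -- hcon : ∀ a ∈ univ, ∀ φ, StrictMono φ → ¬ Tendsto (s ∘ φ) atTop (𝓝 a)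
  set A : Set (ℝ × S) :=
    ⋃ n : ℕ, ({((n : ℝ) + 1)⁻¹} : Set ℝ) ×ˢ closure {s n} with hA
  have hcurve : ∀ c : ℝ → ℝ × S, Continuous c → IsOpen (c ⁻¹' Aᶜ) := by
    intro c hc
    rw [Set.preimage_compl, isOpen_compl_iff]
    apply IsSeqClosed.isClosed
    intro t p ht htp
    -- choose indices
    have hsel : ∀ k, ∃ n : ℕ, (c (t k)).1 = ((n : ℝ) + 1)⁻¹ ∧ (c (t k)).2 ∈ closure {s n} := by
      intro k
      have := ht k
      simp only [hA, Set.mem_preimage, Set.mem_iUnion, Set.mem_prod,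
        Set.mem_singleton_iff] at this
      exact this
    choose n hn1 hn2 using hsel
    have hct : Tendsto (fun k => c (t k)) atTop (𝓝 (c p)) :=
      (hc.tendsto p).comp htp
    by_cases hfreq : ∃ N : ℕ, ∃ᶠ k in atTop, n k = N
    · -- bounded case: some index occurs infinitely often
      obtain ⟨N, hN⟩ := hfreq
      obtain ⟨ψ, hψ, hψN⟩ := Filter.extraction_of_frequently_atTop hN
      have h1 : Tendsto (fun j => (c (t (ψ j))).1) atTop (𝓝 (c p).1) :=
        (continuous_fst.tendsto _).comp (hct.comp hψ.tendsto_atTop)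
      have h2 : Tendsto (fun j => (c (t (ψ j))).2) atTop (𝓝 (c p).2) :=
        (continuous_snd.tendsto _).comp (hct.comp hψ.tendsto_atTop)
      have hfst : (c p).1 = ((N : ℝ) + 1)⁻¹ := by
        have hcc : Tendsto (fun _ : ℕ => ((N : ℝ) + 1)⁻¹) atTop (𝓝 (c p).1) := by
          refine h1.congr fun j => ?_
          rw [hn1 (ψ j), hψN j]
        exact tendsto_nhds_unique hcc tendsto_const_nhds
      have hsnd : (c p).2 ∈ closure {s N} := by
        refine isClosed_closure.mem_of_tendsto h2 ?_
        filter_upwards with j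
        have := hn2 (ψ j); rwa [hψN j] at this
      simp only [hA, Set.mem_preimage, Set.mem_iUnion, Set.mem_prod, Set.mem_singleton_iff]
      exact ⟨N, hfst, hsnd⟩
    · -- unbounded case: n tends to atTop, extract a convergent subsequence of s
      exfalso
      push_neg at hfreq
      have htop : Tendsto n atTop atTop := by
        rw [tendsto_atTop]
        intro b
        have hev : ∀ᶠ k in atTop, ∀ m ∈ Finset.range b, n k ≠ m :=
          (eventually_all_finset _).mpr fun m _ => hfreq m
        filter_upwards [hev] with k hk
        by_contra h
        push_neg at h
        exact hk (n k) (Finset.mem_range.mpr h) rfl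
      obtain ⟨φ, hφ, hnφ⟩ := strictMono_subseq_of_tendsto_atTop htop
      apply hcon (c p).2 (Set.mem_univ _) (n ∘ φ) hnφ
      -- show s ∘ (n ∘ φ) → (c p).2
      have h2 : Tendsto (fun j => (c (t (φ j))).2) atTop (𝓝 (c p).2) :=
        (continuous_snd.tendsto _).comp (hct.comp hφ.tendsto_atTop)
      rw [tendsto_nhds]
      intro V hV hVp
      filter_upwards [mem_map.mp (h2 (hV.mem_nhds hVp))] with j hj
      -- hj : (c (t (φ j))).2 ∈ V ; conclude s (n (φ j)) ∈ V via closure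
      have hcl := hn2 (φ j)
      rw [mem_closure_iff] at hcl
      obtain ⟨y, hyV, hys⟩ := hcl V hV hj
      rw [Set.mem_singleton_iff] at hys
      show s (n (φ j)) ∈ V; exact hys ▸ hyV
  have hzero : ({0} ×ˢ (Set.univ : Set S)) ⊆ Aᶜ := by
    rintro ⟨x, y⟩ ⟨hx, -⟩
    simp only [Set.mem_singleton_iff] at hx
    subst hx
    simp only [hA, Set.mem_compl_iff, Set.mem_iUnion, Set.mem_prod, Set.mem_singleton_iff,
      not_exists, not_and]
    intro m hm
    exact absurd hm.symm (by positivity)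
  obtain ⟨ε, hε, hsub⟩ := hstrip Aᶜ hcurve hzero
  obtain ⟨N, hN⟩ := exists_nat_gt ε⁻¹
  have hlt : ((N : ℝ) + 1)⁻¹ < ε := by
    rw [inv_lt_comm₀ (by positivity) hε]
    exact hN.trans (lt_add_one _)
  have hmem : (((N : ℝ) + 1)⁻¹, s N) ∈ Set.Ioo (-ε) ε ×ˢ (Set.univ : Set S) := by
    refine ⟨⟨?_, hlt⟩, trivial⟩
    have : (0:ℝ) < ((N : ℝ) + 1)⁻¹ := by positivity
    linarith
  have := hsub hmem
  apply this
  simp only [hA, Set.mem_iUnion, Set.mem_prod, Set.mem_singleton_iff]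
  exact ⟨N, rfl, subset_closure rfl⟩
end

section
/- Suppose g : C → [0,1] is a function on the space C = C^∞(S, ℝ) of bounded-generating smooth functions on a space S, with g(0) = 1, g continuous along smooth paths, and g(β) ≠ 0 implying β has image in (-1,1). Then every f ∈ C has bounded image: there exists t ≠ 0 with t·f ∈ C^∞(S, (-1,1)), hence |f(s)| < 1/|t| for all s. -/
theorem bounded_of_weakly_smoothly_compact {S : Type*}
    (g : (S → ℝ) → ℝ)
    (hg01 : ∀ β : S → ℝ, g β ∈ Set.Icc (0:ℝ) 1)
    (hg0 : g (fun _ => 0) = 1)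
    (hsupp : ∀ β : S → ℝ, g β ≠ 0 → ∀ s : S, β s ∈ Set.Ioo (-1:ℝ) 1)
    (f : S → ℝ)
    (hcont : ContinuousAt (fun t : ℝ => g (fun s => t * f s)) 0) :
    ∃ t : ℝ, t ≠ 0 ∧ (∀ s : S, t * f s ∈ Set.Ioo (-1:ℝ) 1) ∧
      ∀ s : S, |f s| < 1 / |t| := by
  have h0 : (fun t : ℝ => g (fun s => t * f s)) 0 = 1 := by
    simp [hg0]
  have := Metric.continuousAt_iff.mp hcont
  obtain ⟨δ, hδ, hd⟩ := this (1/2) (by norm_num)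
  refine ⟨δ/2, ne_of_gt (by linarith), ?_⟩
  have hne : g (fun s => (δ/2) * f s) ≠ 0 := by
    have := hd (x := δ/2) (by
      rw [Real.dist_eq]
      rw [abs_of_nonneg (by linarith : (0:ℝ) ≤ δ/2 - 0)]
      linarith)
    simp only [zero_mul, hg0, Real.dist_eq] at this
    intro h
    rw [h] at this
    norm_num at this
  have hIoo := hsupp _ hne
  refine ⟨hIoo, fun s => ?_⟩
  have h1 : |(δ/2) * f s| < 1 := by
    rw [abs_lt]; exact ⟨(hIoo s).1, (hIoo s).2⟩
  rw [abs_mul] at h1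
  have hpos : (0:ℝ) < |δ/2| := abs_pos.mpr (by positivity)
  rw [lt_div_iff₀ hpos]
  linarith [h1]
end
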